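/- Let B be a finite set of natural numbers, let 𝓟 be a noncrossing partition of B, and let L be a block of 𝓟. Write I_{L'} = [min L', max L'] (interval of integers) for each block L' of 𝓟. Then L = (B ∩ I_L) ∖ ⋃ {I_{L'} : L' a block of 𝓟 with I_{L'} ⊊ I_L}. That is, each block of a noncrossing partition equals the elements of B in its min–max interval that do not lie in any strictly smaller min–max interval of another block contained in it. -/

import Mathlib

/-- `P` is a partition of the finite set `B ⊆ ℕ` into nonempty blocks. -/
def IsPartitionOf (B : Finset ℕ) (P : Finset (Finset ℕ)) : Prop :=
  (∀ L ∈ P, L.Nonempty) ∧ (∀ L ∈ P, L ⊆ B) ∧ ∀ b ∈ B, ∃! L, L ∈ P ∧ b ∈ L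

/-- The noncrossing condition. -/
def PairwiseNoncrossing (P : Finset (Finset ℕ)) : Prop :=
  ∀ L ∈ P, ∀ L' ∈ P, L ≠ L' →
    ∀ a ∈ L, ∀ b ∈ L, ∀ c ∈ L', ∀ d ∈ L', a ≤ b → c ≤ d →
      Finset.Icc a b ∩ Finset.Icc c d = ∅ ∨
      Finset.Icc a b ⊆ Finset.Icc c d ∨ Finset.Icc c d ⊆ Finset.Icc a b

/-- A noncrossing partition (NCP) of the finite set `B ⊆ ℕ`. -/
def IsNCP (B : Finset ℕ) (P : Finset (Finset ℕ)) : Prop :=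
  IsPartitionOf B P ∧ PairwiseNoncrossing P

/-- The min–max interval `I_L = [min L, max L]` of a block, as a set of naturals. -/
def mmInterval (L : Finset ℕ) : Set ℕ := Set.Icc (sInf (L : Set ℕ)) (sSup (L : Set ℕ))

lemma mmInterval_eq {L : Finset ℕ} (h : L.Nonempty) :
    mmInterval L = Set.Icc (L.min' h) (L.max' h) := by
  rw [mmInterval, h.csInf_eq_min', h.csSup_eq_max']

lemma mem_mmInterval_self {L : Finset ℕ} (h : L.Nonempty) {x : ℕ} (hx : x ∈ L) :
    x ∈ mmInterval L := by
  rw [mmInterval_eq h]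
  exact Set.mem_Icc.2 ⟨L.min'_le x hx, L.le_max' x hx⟩

lemma blocks_disjoint {B : Finset ℕ} {P : Finset (Finset ℕ)} (hP : IsPartitionOf B P)
    {L M : Finset ℕ} (hL : L ∈ P) (hM : M ∈ P) (hne : L ≠ M) {x : ℕ}
    (hxL : x ∈ L) (hxM : x ∈ M) : False := by
  obtain ⟨-, hSubB, hUniq⟩ := hP
  obtain ⟨W, -, hW⟩ := hUniq x (hSubB L hL hxL)
  exact hne ((hW L ⟨hL, hxL⟩).trans (hW M ⟨hM, hxM⟩).symm)

/-- Key step: an element of `L` does not lie in a strictly smaller min–max interval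
of another block. -/
lemma key {B : Finset ℕ} {P : Finset (Finset ℕ)} (hP : IsNCP B P)
    {L M : Finset ℕ} (hL : L ∈ P) (hM : M ∈ P) (hne : L ≠ M) {b : ℕ}
    (hb : b ∈ L) (hsub : mmInterval M ⊂ mmInterval L) : b ∉ mmInterval M := by
  obtain ⟨hPart, hNC⟩ := hP
  intro hbM
  have hMne : M.Nonempty := hPart.1 M hM
  have hLne : L.Nonempty := hPart.1 L hL
  set c := M.min' hMne with hc'
  set d := M.max' hMne with hd'
  set p := L.min' hLne with hp'
  set q := L.max' hLne with hq'
  have hc : c ∈ M := M.min'_mem hMne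
  have hd : d ∈ M := M.max'_mem hMne
  have hcd : c ≤ d := M.min'_le d hd
  have hpb : p ≤ b := L.min'_le b hb
  have hbq : b ≤ q := L.le_max' b hb
  rw [mmInterval_eq hMne, mmInterval_eq hLne] at hsub
  rw [mmInterval_eq hMne, Set.mem_Icc] at hbM
  obtain ⟨hcb, hbd⟩ := hbM
  have hsubset : p ≤ c ∧ d ≤ q := (Set.Icc_subset_Icc_iff hcd).1 hsub.1
  have hstrict : p < c ∨ d < q := by
    by_contra hcon
    push_neg at hcon
    exact hsub.2 ((Set.Icc_subset_Icc_iff (hpb.trans hbq)).2 ⟨hcon.1, hcon.2⟩)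
  rcases hstrict with hpc | hdq
  · rcases hNC L hL M hM hne p (L.min'_mem hLne) b hb c hc d hd hpb hcd with h | h | h
    · have : b ∈ Finset.Icc p b ∩ Finset.Icc c d := by
        simp [Finset.mem_Icc, hpb, hcb, hbd, hc', hd']
      rw [h] at this; exact absurd this (Finset.notMem_empty b)
    · have : c ≤ p := (Finset.mem_Icc.1 (h (Finset.mem_Icc.2 ⟨le_refl p, hpb⟩))).1
      omega
    · have : d ≤ b := (Finset.mem_Icc.1 (h (Finset.mem_Icc.2 ⟨hcd, le_refl d⟩))).2
      have hbd' : b = d := le_antisymm hbd this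
      exact blocks_disjoint hPart hL hM hne hb (hbd' ▸ hd)
  · rcases hNC L hL M hM hne b hb q (L.max'_mem hLne) c hc d hd hbq hcd with h | h | h
    · have : b ∈ Finset.Icc b q ∩ Finset.Icc c d := by
        simp [Finset.mem_Icc, hbq, hcb, hbd, hc', hd']
      rw [h] at this; exact absurd this (Finset.notMem_empty b)
    · have : q ≤ d := (Finset.mem_Icc.1 (h (Finset.mem_Icc.2 ⟨hbq, le_refl q⟩))).2
      omega
    · have : b ≤ c := (Finset.mem_Icc.1 (h (Finset.mem_Icc.2 ⟨le_refl c, hcd⟩))).1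
      have hbc' : b = c := le_antisymm this hcb
      exact blocks_disjoint hPart hL hM hne hb (hbc' ▸ hc)

/-- Each block of a noncrossing partition equals the elements of `B` in its min–max
interval that do not lie in any strictly smaller min–max interval of another block. -/
theorem stmt9 (B : Finset ℕ) (P : Finset (Finset ℕ)) (hP : IsNCP B P)
    (L : Finset ℕ) (hL : L ∈ P) :
    (L : Set ℕ) =
      ((B : Set ℕ) ∩ mmInterval L) \
        (⋃ L' ∈ P, ⋃ (_ : mmInterval L' ⊂ mmInterval L), mmInterval L') := by
  obtain ⟨hPart, hNC⟩ := hP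
  have hLne : L.Nonempty := hPart.1 L hL
  ext x
  simp only [Set.mem_diff, Set.mem_inter_iff, Set.mem_iUnion, Finset.mem_coe,
    not_exists, exists_prop]
  constructor
  · intro hx
    refine ⟨⟨hPart.2.1 L hL hx, mem_mmInterval_self hLne hx⟩, ?_⟩
    rintro M ⟨hM, hMsub, hxM⟩
    have hne : L ≠ M := fun h => absurd (h ▸ hMsub) (lt_irrefl _)
    exact key ⟨hPart, hNC⟩ hL hM hne hx hMsub hxM
  · rintro ⟨⟨hxB, hxI⟩, hnot⟩
    obtain ⟨M, ⟨hM, hxM⟩, -⟩ := hPart.2.2 x hxB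
    by_contra hxL
    have hne : L ≠ M := fun h => hxL (h ▸ hxM)
    have hMne : M.Nonempty := hPart.1 M hM
    set c := M.min' hMne
    set d := M.max' hMne
    set p := L.min' hLne
    set q := L.max' hLne
    have hcd : c ≤ d := M.min'_le d (M.max'_mem hMne)
    have hpq : p ≤ q := L.min'_le q (L.max'_mem hLne)
    have hxI' : p ≤ x ∧ x ≤ q := by
      rw [mmInterval_eq hLne, Set.mem_Icc] at hxI; exact hxI
    have hxM' : c ≤ x ∧ x ≤ d := ⟨M.min'_le x hxM, M.le_max' x hxM⟩
    rcases hNC L hL M hM hne p (L.min'_mem hLne) q (L.max'_mem hLne)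
        c (M.min'_mem hMne) d (M.max'_mem hMne) hpq hcd with h | h | h
    · have : x ∈ Finset.Icc p q ∩ Finset.Icc c d := by
        simp [Finset.mem_Icc, hxI'.1, hxI'.2, hxM'.1, hxM'.2]
      rw [h] at this; exact absurd this (Finset.notMem_empty x)
    · -- Icc p q ⊆ Icc c d : then mmInterval L ⊆ mmInterval M
      have hsub : mmInterval L ⊆ mmInterval M := by
        rw [mmInterval_eq hLne, mmInterval_eq hMne, ← Finset.coe_Icc, ← Finset.coe_Icc]
        exact_mod_cast h
      rcases eq_or_lt_of_le (Set.le_iff_subset.2 hsub) with heq | hlt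
      · -- equal intervals: p = c would be in both blocks
        have heq' : Set.Icc p q = Set.Icc c d := by
          rw [mmInterval_eq hLne, mmInterval_eq hMne] at heq; exact heq
        have hcp : c ≤ p ∧ q ≤ d := (Set.Icc_subset_Icc_iff hpq).1 heq'.le
        have hpc : p ≤ c ∧ d ≤ q := (Set.Icc_subset_Icc_iff hcd).1 heq'.ge
        have hmem : L.min' hLne ∈ M := by
          have : L.min' hLne = M.min' hMne := le_antisymm hpc.1 hcp.1
          rw [this]; exact M.min'_mem hMne
        exact blocks_disjoint hPart hL hM hne (L.min'_mem hLne) hmem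
      · exact key ⟨hPart, hNC⟩ hM hL hne.symm hxM hlt hxI
    · -- Icc c d ⊆ Icc p q : then mmInterval M ⊆ mmInterval L
      have hsub : mmInterval M ⊆ mmInterval L := by
        rw [mmInterval_eq hLne, mmInterval_eq hMne, ← Finset.coe_Icc, ← Finset.coe_Icc]
        exact_mod_cast h
      rcases eq_or_lt_of_le (Set.le_iff_subset.2 hsub) with heq | hlt
      · have heq' : Set.Icc p q = Set.Icc c d := by
          rw [mmInterval_eq hLne, mmInterval_eq hMne] at heq; exact heq.symm
        have hcp : c ≤ p ∧ q ≤ d := (Set.Icc_subset_Icc_iff hpq).1 heq'.le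
        have hpc : p ≤ c ∧ d ≤ q := (Set.Icc_subset_Icc_iff hcd).1 heq'.ge
        have hmem : L.min' hLne ∈ M := by
          have : L.min' hLne = M.min' hMne := le_antisymm hpc.1 hcp.1
          rw [this]; exact M.min'_mem hMne
        exact blocks_disjoint hPart hL hM hne (L.min'_mem hLne) hmem
      · exact hnot M ⟨hM, hlt, mem_mmInterval_self hMne hxM⟩
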